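/- (Beck–Fiala) Let t > 0 and let A be a real m × n matrix such that the ℓ₁-norm of every column of A is at most t, i.e., ∑_{i=1}^m |A_{ij}| ≤ t for every column j. Then disc(A) < t, i.e., there exists z ∈ {0,1}^n such that for every row i, |∑_{j=1}^n A_{ij}·(z_j − 1/2)| < t. Since every column submatrix of A also has all column ℓ₁-norms at most t, this yields herdisc(A) < t. -/

import Mathlib

open Finset

lemma bf_key {m n : ℕ} (t : ℝ) (ht : 0 < t) (A : Matrix (Fin m) (Fin n) ℝ)
    (hcol : ∀ j, ∑ i, |A i j| ≤ t) :
    ∀ k : ℕ, ∀ x : Fin n → ℝ, (∀ j, 0 ≤ x j) → (∀ j, x j ≤ 1) →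
      (Finset.univ.filter fun j => x j ≠ 0 ∧ x j ≠ 1).card ≤ k →
      ∃ z : Fin n → ℝ, (∀ j, z j = 0 ∨ z j = 1) ∧
        (∀ j, (x j = 0 ∨ x j = 1) → z j = x j) ∧
        ∀ i, |∑ j, A i j * (z j - x j)| < t := by
  intro k
  induction k with
  | zero =>
      intro x hx0 hx1 hcard
      refine ⟨x, ?_, fun j _ => rfl, ?_⟩
      · intro j
        by_contra h
        push_neg at h
        have : j ∈ Finset.univ.filter fun j => x j ≠ 0 ∧ x j ≠ 1 := by
          simp [h.1, h.2]
        have := Finset.card_pos.mpr ⟨j, this⟩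
        omega
      · intro i
        simpa using ht
  | succ k ih =>
      intro x hx0 hx1 hcard
      set F : Finset (Fin n) := Finset.univ.filter fun j => x j ≠ 0 ∧ x j ≠ 1 with hF
      by_cases hFe : F = ∅
      · refine ⟨x, ?_, fun j _ => rfl, ?_⟩
        · intro j
          by_contra h
          push_neg at h
          have : j ∈ F := by simp [hF, h.1, h.2]
          simp [hFe] at this
        · intro i
          simpa using ht
      have hFne : F.Nonempty := Finset.nonempty_of_ne_empty hFe
      -- basic facts about floating coordinates
      have hmemF : ∀ j ∈ F, 0 < x j ∧ x j < 1 := by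
        intro j hj
        rw [hF, Finset.mem_filter] at hj
        exact ⟨lt_of_le_of_ne (hx0 j) (Ne.symm hj.2.1), lt_of_le_of_ne (hx1 j) hj.2.2⟩
      -- active rows
      set Act : Finset (Fin m) := Finset.univ.filter fun i => t < ∑ j ∈ F, |A i j| with hAct
      have hcardlt : Act.card < F.card := by
        by_cases hAe : Act = ∅
        · simpa [hAe] using Finset.card_pos.mpr hFne
        have hAne : Act.Nonempty := Finset.nonempty_of_ne_empty hAe
        have h1 : (Act.card : ℝ) * t < ∑ i ∈ Act, ∑ j ∈ F, |A i j| := by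
          calc (Act.card : ℝ) * t = ∑ _i ∈ Act, t := by
                rw [Finset.sum_const, nsmul_eq_mul]
            _ < ∑ i ∈ Act, ∑ j ∈ F, |A i j| := by
                apply Finset.sum_lt_sum_of_nonempty hAne
                intro i hi
                rw [hAct, Finset.mem_filter] at hi
                exact hi.2
        have h2 : ∑ i ∈ Act, ∑ j ∈ F, |A i j| ≤ ∑ i : Fin m, ∑ j ∈ F, |A i j| := by
          apply Finset.sum_le_sum_of_subset_of_nonneg (Finset.subset_univ _)
          intro i _ _
          exact Finset.sum_nonneg fun j _ => abs_nonneg _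
        have h3 : ∑ i : Fin m, ∑ j ∈ F, |A i j| ≤ (F.card : ℝ) * t := by
          rw [Finset.sum_comm]
          calc ∑ j ∈ F, ∑ i : Fin m, |A i j| ≤ ∑ _j ∈ F, t :=
                Finset.sum_le_sum fun j _ => hcol j
            _ = (F.card : ℝ) * t := by rw [Finset.sum_const, nsmul_eq_mul]
        have : (Act.card : ℝ) * t < (F.card : ℝ) * t := lt_of_lt_of_le h1 (le_trans h2 h3)
        have := (mul_lt_mul_iff_left₀ ht).mp this
        exact_mod_cast this
      -- find a nonzero kernel vector
      set B : Matrix ↥Act ↥F ℝ := Matrix.of fun i j => A i j with hB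
      have hker : LinearMap.ker B.mulVecLin ≠ ⊥ := by
        apply LinearMap.ker_ne_bot_of_finrank_lt
        simpa [Module.finrank_pi] using hcardlt
      obtain ⟨u, hu_ker, hu_ne⟩ := Submodule.exists_mem_ne_zero_of_ne_bot hker
      have hu0 : ∀ i : ↥Act, ∑ j : ↥F, A i j * u j = 0 := by
        intro i
        have := LinearMap.mem_ker.mp hu_ker
        have := congrFun this i
        simpa [Matrix.mulVecLin, Matrix.mulVec, dotProduct, hB] using this
      -- extend u to all coordinates
      set v : Fin n → ℝ := fun j => if h : j ∈ F then u ⟨j, h⟩ else 0 with hv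
      have hv_off : ∀ j, j ∉ F → v j = 0 := fun j hj => by simp [hv, hj]
      -- the set of moving coordinates
      set S : Finset (Fin n) := F.filter fun j => v j ≠ 0 with hS
      have hSne : S.Nonempty := by
        obtain ⟨j0, hj0⟩ := Function.ne_iff.mp hu_ne
        simp only [Pi.zero_apply] at hj0
        exact ⟨(j0 : Fin n), by simp [hS, hv, j0.2, hj0]⟩
      -- step size candidates
      set c : Fin n → ℝ := fun j => if 0 < v j then (1 - x j) / v j else x j / (-(v j)) with hc
      obtain ⟨j0, hj0S, hj0min⟩ := Finset.exists_min_image S c hSne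
      set lam : ℝ := c j0 with hlam
      have hcpos : ∀ j ∈ S, 0 < c j := by
        intro j hjS
        rw [hS, Finset.mem_filter] at hjS
        obtain ⟨hjF, hvne⟩ := hjS
        obtain ⟨hx0', hx1'⟩ := hmemF j hjF
        rw [hc]
        by_cases hpos : 0 < v j
        · simp only [hpos, if_true]
          exact div_pos (by linarith) hpos
        · simp only [hpos, if_false]
          have : v j < 0 := lt_of_le_of_ne (not_lt.mp hpos) hvne
          exact div_pos hx0' (by linarith)
      have hlampos : 0 < lam := hcpos j0 hj0S
      -- the new point
      set y : Fin n → ℝ := fun j => x j + lam * v j with hy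
      have hy_off : ∀ j, j ∉ S → y j = x j := by
        intro j hj
        by_cases hjF : j ∈ F
        · have : v j = 0 := by
            by_contra h
            exact hj (by simp [hS, Finset.mem_filter, hjF, h])
          simp [hy, this]
        · simp [hy, hv_off j hjF]
      have hy0 : ∀ j, 0 ≤ y j := by
        intro j
        by_cases hjS : j ∈ S
        · have hcj := hj0min j hjS
          have hjF : j ∈ F := (Finset.mem_filter.mp (hjS)).1
          obtain ⟨hx0', hx1'⟩ := hmemF j hjF
          by_cases hpos : 0 < v j
          · simp only [hy]
            nlinarith [mul_pos hlampos hpos]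
          · have hvne : v j ≠ 0 := (Finset.mem_filter.mp (hjS)).2
            have hvneg : v j < 0 := lt_of_le_of_ne (not_lt.mp hpos) hvne
            have hcj' : c j = x j / (-(v j)) := by simp [hc, hpos]
            have : lam ≤ x j / (-(v j)) := hcj' ▸ hcj
            have h2 : lam * (-(v j)) ≤ x j := by
              rw [div_eq_mul_inv] at this
              have := mul_le_mul_of_nonneg_right this (le_of_lt (neg_pos.mpr hvneg))
              rwa [mul_assoc, inv_mul_cancel₀ (by linarith : -(v j) ≠ 0), mul_one] at this
            simp only [hy]
            nlinarith
        · rw [hy_off j hjS]; exact hx0 j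
      have hy1 : ∀ j, y j ≤ 1 := by
        intro j
        by_cases hjS : j ∈ S
        · have hcj := hj0min j hjS
          have hjF : j ∈ F := (Finset.mem_filter.mp (hjS)).1
          obtain ⟨hx0', hx1'⟩ := hmemF j hjF
          by_cases hpos : 0 < v j
          · have hcj' : c j = (1 - x j) / v j := by simp [hc, hpos]
            have : lam ≤ (1 - x j) / v j := hcj' ▸ hcj
            have h2 : lam * v j ≤ 1 - x j := by
              rw [div_eq_mul_inv] at this
              have := mul_le_mul_of_nonneg_right this (le_of_lt hpos)
              rwa [mul_assoc, inv_mul_cancel₀ (ne_of_gt hpos), mul_one] at this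
            simp only [hy]; linarith
          · have hvne : v j ≠ 0 := (Finset.mem_filter.mp (hjS)).2
            have hvneg : v j < 0 := lt_of_le_of_ne (not_lt.mp hpos) hvne
            have : lam * v j < 0 := mul_neg_of_pos_of_neg hlampos hvneg
            simp only [hy]; linarith
        · rw [hy_off j hjS]; exact hx1 j
      -- j0 becomes fixed
      have hj0fix : y j0 = 0 ∨ y j0 = 1 := by
        have hvne : v j0 ≠ 0 := (Finset.mem_filter.mp (hj0S)).2
        by_cases hpos : 0 < v j0
        · right
          have hcj' : lam = (1 - x j0) / v j0 := by simp [hlam, hc, hpos]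
          simp only [hy, hcj']
          field_simp
          ring
        · left
          have hvneg : v j0 < 0 := lt_of_le_of_ne (not_lt.mp hpos) hvne
          have hcj' : lam = x j0 / (-(v j0)) := by simp [hlam, hc, hpos]
          have hvne' : -(v j0) ≠ 0 := neg_ne_zero.mpr hvne
          simp only [hy, hcj']
          field_simp
          ring
      -- new floating set is smaller
      have hFy : (Finset.univ.filter fun j => y j ≠ 0 ∧ y j ≠ 1) ⊆ F.erase j0 := by
        intro j hj
        rw [Finset.mem_filter] at hj
        obtain ⟨-, hj1, hj2⟩ := hj
        rw [Finset.mem_erase]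
        constructor
        · rintro rfl
          rcases hj0fix with h | h
          · exact hj1 h
          · exact hj2 h
        · by_contra hjF
          have := hy_off j (fun hjS => hjF (Finset.mem_filter.mp (hjS)).1)
          rw [this] at hj1 hj2
          exact absurd (by simp [hF, hj1, hj2] : j ∈ F) hjF
      have hcard' : (Finset.univ.filter fun j => y j ≠ 0 ∧ y j ≠ 1).card ≤ k := by
        have h1 := Finset.card_le_card hFy
        have h2 : (F.erase j0).card < F.card :=
          Finset.card_erase_lt_of_mem (Finset.mem_filter.mp (hj0S)).1
        omega
      -- apply induction hypothesis
      obtain ⟨z, hz01, hzfix, hzlt⟩ := ih y hy0 hy1 hcard'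
      refine ⟨z, hz01, ?_, ?_⟩
      · intro j hj
        have hjF : j ∉ F := by
          rw [hF, Finset.mem_filter]
          rintro ⟨-, h1, h2⟩
          rcases hj with h | h
          · exact h1 h
          · exact h2 h
        have hjS : j ∉ S := fun hjS => hjF (Finset.mem_filter.mp (hjS)).1
        rw [hzfix j (by rw [hy_off j hjS]; exact hj), hy_off j hjS]
      · intro i
        have hsplit : ∑ j, A i j * (z j - x j)
            = ∑ j, A i j * (z j - y j) + lam * ∑ j, A i j * v j := by
          rw [Finset.mul_sum, ← Finset.sum_add_distrib]
          congr 1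
          ext j
          simp only [hy]
          ring
        have hvsum : ∑ j, A i j * v j = ∑ j ∈ F, A i j * v j := by
          symm
          apply Finset.sum_subset (Finset.subset_univ _)
          intro j _ hjF
          rw [hv_off j hjF, mul_zero]
        by_cases hiAct : i ∈ Act
        · have h0 : ∑ j ∈ F, A i j * v j = 0 := by
            rw [← Finset.sum_attach F (fun j => A i j * v j)]
            have := hu0 ⟨i, hiAct⟩
            rw [← this]
            apply Finset.sum_congr rfl
            intro j _
            congr 1
            simp [hv, j.2]
          rw [hsplit, hvsum, h0, mul_zero, add_zero]
          exact hzlt i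
        · -- inactive row: direct bound
          have hmass : ∑ j ∈ F, |A i j| ≤ t := by
            by_contra h
            exact hiAct (by simp [hAct]; linarith)
          have hzx_off : ∀ j, j ∉ F → z j = x j := by
            intro j hjF
            have hjS : j ∉ S := fun hjS => hjF (Finset.mem_filter.mp (hjS)).1
            have hyx := hy_off j hjS
            have : x j = 0 ∨ x j = 1 := by
              by_contra h
              push_neg at h
              exact hjF (by simp [hF, h.1, h.2])
            rw [hzfix j (by rw [hyx]; exact this), hyx]
          have hsum_restrict : ∑ j, A i j * (z j - x j) = ∑ j ∈ F, A i j * (z j - x j) := by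
            symm
            apply Finset.sum_subset (Finset.subset_univ _)
            intro j _ hjF
            rw [hzx_off j hjF, sub_self, mul_zero]
          rw [hsum_restrict]
          calc |∑ j ∈ F, A i j * (z j - x j)| ≤ ∑ j ∈ F, |A i j * (z j - x j)| :=
                Finset.abs_sum_le_sum_abs _ _
            _ = ∑ j ∈ F, |A i j| * |z j - x j| := by
                apply Finset.sum_congr rfl; intro j _; exact abs_mul _ _
            _ < t := by
                by_cases hall : ∀ j ∈ F, A i j = 0
                · have : ∑ j ∈ F, |A i j| * |z j - x j| = 0 :=
                    Finset.sum_eq_zero fun j hj => by rw [hall j hj]; simp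
                  rw [this]; exact ht
                · push_neg at hall
                  obtain ⟨j1, hj1F, hj1ne⟩ := hall
                  have hlt : ∑ j ∈ F, |A i j| * |z j - x j| < ∑ j ∈ F, |A i j| := by
                    apply Finset.sum_lt_sum
                    · intro j hjF
                      have hb : |z j - x j| ≤ 1 := by
                        obtain ⟨h0, h1⟩ := hmemF j hjF
                        rcases hz01 j with h | h <;> rw [h, abs_le] <;> constructor <;> linarith
                      calc |A i j| * |z j - x j| ≤ |A i j| * 1 :=
                            mul_le_mul_of_nonneg_left hb (abs_nonneg _)
                        _ = |A i j| := mul_one _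
                    · refine ⟨j1, hj1F, ?_⟩
                      obtain ⟨h0, h1⟩ := hmemF j1 hj1F
                      have hb : |z j1 - x j1| < 1 := by
                        rcases hz01 j1 with h | h <;> rw [h, abs_lt] <;> constructor <;> linarith
                      have hA : 0 < |A i j1| := abs_pos.mpr hj1ne
                      calc |A i j1| * |z j1 - x j1| < |A i j1| * 1 :=
                            (mul_lt_mul_iff_right₀ hA).mpr hb
                        _ = |A i j1| := mul_one _
                  linarith

lemma bf_main {m n : ℕ} (t : ℝ) (ht : 0 < t) (A : Matrix (Fin m) (Fin n) ℝ)
    (hcol : ∀ j, ∑ i, |A i j| ≤ t) :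
    ∃ z : Fin n → ℝ, (∀ j, z j = 0 ∨ z j = 1) ∧
      ∀ i, |∑ j, A i j * (z j - 1 / 2)| < t := by
  obtain ⟨z, hz01, -, hzlt⟩ := bf_key t ht A hcol n (fun _ => 1 / 2)
    (fun j => by norm_num) (fun j => by norm_num)
    (le_trans (Finset.card_le_card (Finset.subset_univ _)) (by simp))
  exact ⟨z, hz01, hzlt⟩

/-- Beck–Fiala: if every column of `A` has `ℓ₁`-norm at most `t`, then `disc(A) < t`, and
since the hypothesis is inherited by column submatrices, also `herdisc(A) < t`. -/
theorem stmt_14 {m n : ℕ} (t : ℝ) (ht : 0 < t) (A : Matrix (Fin m) (Fin n) ℝ)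
    (hcol : ∀ j, ∑ i, |A i j| ≤ t) :
    (∃ z : Fin n → ℝ, (∀ j, z j = 0 ∨ z j = 1) ∧
      ∀ i, |∑ j, A i j * (z j - 1 / 2)| < t) ∧
    ∀ I : Finset (Fin n), ∃ z : Fin n → ℝ, (∀ j, z j = 0 ∨ z j = 1) ∧
      ∀ i, |∑ j ∈ I, A i j * (z j - 1 / 2)| < t := by
  constructor
  · exact bf_main t ht A hcol
  · intro I
    set A' : Matrix (Fin m) (Fin n) ℝ := Matrix.of fun i j => if j ∈ I then A i j else 0
      with hA'
    have hcol' : ∀ j, ∑ i, |A' i j| ≤ t := by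
      intro j
      by_cases hj : j ∈ I
      · simpa [hA', hj] using hcol j
      · simp [hA', hj]
        exact le_of_lt ht
    obtain ⟨z, hz01, hzlt⟩ := bf_main t ht A' hcol'
    refine ⟨z, hz01, fun i => ?_⟩
    have : ∑ j, A' i j * (z j - 1 / 2) = ∑ j ∈ I, A i j * (z j - 1 / 2) := by
      rw [show (∑ j, A' i j * (z j - 1 / 2))
          = ∑ j : Fin n, (if j ∈ I then A i j * (z j - 1 / 2) else 0) from
        Finset.sum_congr rfl fun j _ => by by_cases hj : j ∈ I <;> simp [hA', hj]]
      rw [Finset.sum_ite_mem, Finset.univ_inter]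
    rw [← this]
    exact hzlt i
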